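/- The multiple zeta value ζ(3,1) = ∑_{k_1 > k_2 ≥ 1} 1/(k_1³ k_2) equals π⁴/360, i.e., ζ(4) = 4·ζ(3,1). -/

import Mathlib

open Real

namespace Z31

noncomputable def G : ℕ × ℕ → ℝ := fun p => ((p.1 : ℝ) ^ 2)⁻¹ * ((p.2 : ℝ) ^ 2)⁻¹

noncomputable def s : ℕ × ℕ → ℝ :=
  fun p => if p.2 < p.1 then ((p.1 : ℝ) ^ 3 * (p.2 : ℝ))⁻¹ else 0

noncomputable def t : ℕ × ℕ → ℝ := fun p => if p.2 < p.1 then G p else 0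

lemma hf2 : Summable (fun n : ℕ => ((n : ℝ) ^ 2)⁻¹) := by
  simpa [one_div] using hasSum_zeta_two.summable

lemma hG : Summable G := by
  have h : Summable (fun n : ℕ => ‖((n : ℝ) ^ 2)⁻¹‖) := by
    have he : (fun n : ℕ => ‖((n : ℝ) ^ 2)⁻¹‖) = fun n : ℕ => ((n : ℝ) ^ 2)⁻¹ := by
      funext n; rw [Real.norm_eq_abs, abs_of_nonneg (by positivity)]
    rw [he]; exact hf2
  exact (h.mul_norm h).of_norm

lemma G_nonneg (p : ℕ × ℕ) : 0 ≤ G p := by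
  unfold G; positivity

lemma s_le_G (p : ℕ × ℕ) : s p ≤ G p := by
  obtain ⟨m, n⟩ := p
  unfold s G
  simp only
  split_ifs with h
  · rcases Nat.eq_zero_or_pos n with hn | hn
    · subst hn; simp
    · rw [← mul_inv]
      have hm : (n : ℝ) < m := by exact_mod_cast h
      have hn' : (1 : ℝ) ≤ n := by exact_mod_cast hn
      have hm0 : (0:ℝ) < m := by linarith
      have hn0 : (0:ℝ) < n := by linarith
      apply inv_anti₀
      · exact mul_pos (pow_pos hm0 2) (pow_pos hn0 2)
      · have key : (0:ℝ) ≤ (m:ℝ)^2 * n * ((m:ℝ) - n) :=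
          mul_nonneg (mul_nonneg (sq_nonneg _) (by linarith)) (by linarith)
        nlinarith [key]
  · positivity

lemma hs : Summable s := by
  refine Summable.of_nonneg_of_le (fun p => ?_) s_le_G hG
  unfold s; split_ifs <;> positivity

lemma ht : Summable t := by
  have : t = Set.indicator {p : ℕ × ℕ | p.2 < p.1} G := by
    funext p; simp [t, Set.indicator_apply]
  rw [this]; exact hG.indicator _

lemma G_swap (p : ℕ × ℕ) : G (p.2, p.1) = G p := by
  unfold G; ring

lemma tsum_G : ∑' p : ℕ × ℕ, G p = π ^ 4 / 36 := by
  have h2 : ∑' n : ℕ, ((n : ℝ) ^ 2)⁻¹ = π ^ 2 / 6 := by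
    simpa [one_div] using hasSum_zeta_two.tsum_eq
  have h : Summable (fun n : ℕ => ‖((n : ℝ) ^ 2)⁻¹‖) := by
    have he : (fun n : ℕ => ‖((n : ℝ) ^ 2)⁻¹‖) = fun n : ℕ => ((n : ℝ) ^ 2)⁻¹ := by
      funext n; rw [Real.norm_eq_abs, abs_of_nonneg (by positivity)]
    rw [he]; exact hf2
  have := tsum_mul_tsum_of_summable_norm (R := ℝ) h h
  rw [h2] at this
  unfold G
  rw [← this]
  ring

lemma tsum_diag : ∑' p : ℕ × ℕ, (if p.1 = p.2 then G p else 0) = π ^ 4 / 90 := by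
  have hinj : Function.Injective (fun k : ℕ => (k, k)) := by
    intro a b h; simpa using congrArg Prod.fst h
  have hsupp : Function.support (fun p : ℕ × ℕ => if p.1 = p.2 then G p else 0)
      ⊆ Set.range (fun k : ℕ => (k, k)) := by
    intro p hp
    by_cases h : p.1 = p.2
    · exact ⟨p.1, by rw [Prod.ext_iff]; exact ⟨rfl, h⟩⟩
    · simp [h] at hp
  rw [← hinj.tsum_eq hsupp]
  have : (fun k : ℕ => if (k, k).1 = (k, k).2 then G (k, k) else 0)
      = fun k : ℕ => 1 / (k : ℝ) ^ 4 := by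
    funext k
    simp only [if_pos rfl, G, one_div]
    rw [← mul_inv, ← pow_add]
    norm_num
  rw [this]
  exact hasSum_zeta_four.tsum_eq

lemma sum_A : ∑' p : ℕ × ℕ, G p = 2 * (∑' p, t p) + π ^ 4 / 90 := by
  have hts : Summable (fun p : ℕ × ℕ => t (p.2, p.1)) := by
    have := (Equiv.prodComm ℕ ℕ).summable_iff (f := t)
    exact this.2 ht
  have hd : Summable (fun p : ℕ × ℕ => if p.1 = p.2 then G p else 0) := by
    have : (fun p : ℕ × ℕ => if p.1 = p.2 then G p else 0)
        = Set.indicator {p : ℕ × ℕ | p.1 = p.2} G := by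
      funext p; simp [Set.indicator_apply]
    rw [this]; exact hG.indicator _
  have hdecomp : ∀ p : ℕ × ℕ, G p = t p + t (p.2, p.1) + (if p.1 = p.2 then G p else 0) := by
    intro p
    rcases lt_trichotomy p.2 p.1 with h | h | h
    · simp [t, h, h.ne', not_lt.2 h.le, G_swap]
    · simp [t, h, lt_irrefl]
    · simp [t, h, h.ne, not_lt.2 h.le, G_swap]
  calc ∑' p : ℕ × ℕ, G p
      = ∑' p : ℕ × ℕ, (t p + t (p.2, p.1) + (if p.1 = p.2 then G p else 0)) :=
        tsum_congr hdecomp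
    _ = (∑' p, t p) + (∑' p : ℕ × ℕ, t (p.2, p.1)) + π ^ 4 / 90 := by
        rw [Summable.tsum_add (ht.add hts) hd, Summable.tsum_add ht hts, tsum_diag]
    _ = 2 * (∑' p, t p) + π ^ 4 / 90 := by
        have : (∑' p : ℕ × ℕ, t (p.2, p.1)) = ∑' p, t p :=
          (Equiv.prodComm ℕ ℕ).tsum_eq t
        rw [this]; ring

noncomputable def H : ℕ × ℕ → ℝ := fun p => t p + 2 * s p

lemma hH : Summable H := ht.add (hs.mul_left 2)

lemma H_eq_zero_of_not_lt {p : ℕ × ℕ} (h : ¬ p.2 < p.1) : H p = 0 := by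
  simp [H, t, s, h]

lemma key_identity (p : ℕ × ℕ) :
    G p = H (p.1 + p.2, p.1) + H (p.1 + p.2, p.2) := by
  obtain ⟨m, n⟩ := p
  rcases Nat.eq_zero_or_pos m with hm | hm
  · subst hm; simp [G, H, t, s]
  rcases Nat.eq_zero_or_pos n with hn | hn
  · subst hn; simp [G, H, t, s]
  have h1 : m < m + n := Nat.lt_add_of_pos_right hn
  have h2 : n < m + n := Nat.lt_add_of_pos_left hm
  have hm' : (0 : ℝ) < m := by exact_mod_cast hm
  have hn' : (0 : ℝ) < n := by exact_mod_cast hn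
  simp only [G, H, t, s, if_pos h1, if_pos h2, Nat.cast_add]
  field_simp
  ring

lemma sum_B : ∑' p : ℕ × ℕ, G p = 2 * (∑' p, t p) + 4 * (∑' p, s p) := by
  have hj1 : Function.Injective (fun p : ℕ × ℕ => (p.1 + p.2, p.1)) := by
    intro a b h
    simp only [Prod.mk.injEq] at h
    obtain ⟨h1, h2⟩ := h
    rw [Prod.ext_iff]
    exact ⟨h2, by omega⟩
  have hj2 : Function.Injective (fun p : ℕ × ℕ => (p.1 + p.2, p.2)) := by
    intro a b h
    simp only [Prod.mk.injEq] at h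
    obtain ⟨h1, h2⟩ := h
    rw [Prod.ext_iff]
    exact ⟨by omega, h2⟩
  have hr1 : Function.support H ⊆ Set.range (fun p : ℕ × ℕ => (p.1 + p.2, p.1)) := by
    intro p hp
    have hlt : p.2 < p.1 := by
      by_contra h; exact hp (H_eq_zero_of_not_lt h)
    exact ⟨(p.2, p.1 - p.2), by rw [Prod.ext_iff]; constructor <;> simp <;> omega⟩
  have hr2 : Function.support H ⊆ Set.range (fun p : ℕ × ℕ => (p.1 + p.2, p.2)) := by
    intro p hp
    have hlt : p.2 < p.1 := by
      by_contra h; exact hp (H_eq_zero_of_not_lt h)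
    exact ⟨(p.1 - p.2, p.2), by rw [Prod.ext_iff]; constructor <;> simp <;> omega⟩
  have hc1 : Summable (fun p : ℕ × ℕ => H (p.1 + p.2, p.1)) := by
    have := hH.comp_injective hj1
    exact this
  have hc2 : Summable (fun p : ℕ × ℕ => H (p.1 + p.2, p.2)) := by
    have := hH.comp_injective hj2
    exact this
  calc ∑' p : ℕ × ℕ, G p
      = ∑' p : ℕ × ℕ, (H (p.1 + p.2, p.1) + H (p.1 + p.2, p.2)) :=
        tsum_congr key_identity
    _ = (∑' p : ℕ × ℕ, H (p.1 + p.2, p.1)) + ∑' p : ℕ × ℕ, H (p.1 + p.2, p.2) :=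
        Summable.tsum_add hc1 hc2
    _ = (∑' p, H p) + ∑' p, H p := by rw [hj1.tsum_eq hr1, hj2.tsum_eq hr2]
    _ = 2 * ((∑' p, t p) + 2 * ∑' p, s p) := by
        rw [show (∑' p, H p) = (∑' p, t p) + 2 * ∑' p, s p from by
          rw [show H = fun p => t p + 2 * s p from rfl,
            Summable.tsum_add ht (hs.mul_left 2), tsum_mul_left]]
        ring
    _ = 2 * (∑' p, t p) + 4 * (∑' p, s p) := by ring

lemma tsum_s : ∑' p, s p = π ^ 4 / 360 := by
  have h := sum_A.symm.trans sum_B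
  linarith

end Z31

/-- `ζ(3,1) = ∑_{k₁ > k₂ ≥ 1} 1/(k₁³ k₂) = π⁴/360`, i.e. `ζ(4) = 4·ζ(3,1)`. -/
theorem zeta_three_one :
    (∑' p : {p : ℕ × ℕ // p.2 < p.1 ∧ 1 ≤ p.2},
      ((p.1.1 : ℝ) ^ 3 * (p.1.2 : ℝ))⁻¹ = Real.pi ^ 4 / 360) ∧
    (∑' k : ℕ+, ((k : ℝ) ^ 4)⁻¹ =
      4 * ∑' p : {p : ℕ × ℕ // p.2 < p.1 ∧ 1 ≤ p.2},
        ((p.1.1 : ℝ) ^ 3 * (p.1.2 : ℝ))⁻¹) := by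
  have hmain : ∑' p : {p : ℕ × ℕ // p.2 < p.1 ∧ 1 ≤ p.2},
      ((p.1.1 : ℝ) ^ 3 * (p.1.2 : ℝ))⁻¹ = Real.pi ^ 4 / 360 := by
    have hsub := tsum_subtype {p : ℕ × ℕ | p.2 < p.1 ∧ 1 ≤ p.2}
        (fun p : ℕ × ℕ => ((p.1 : ℝ) ^ 3 * (p.2 : ℝ))⁻¹)
    refine hsub.trans ?_
    have : ∀ p : ℕ × ℕ,
        Set.indicator {p : ℕ × ℕ | p.2 < p.1 ∧ 1 ≤ p.2}
          (fun p => ((p.1 : ℝ) ^ 3 * (p.2 : ℝ))⁻¹) p = Z31.s p := by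
      intro p
      by_cases h1 : p.2 < p.1
      · by_cases h2 : 1 ≤ p.2
        · simp [Set.indicator_apply, h1, h2, Z31.s]
        · have : p.2 = 0 := by omega
          simp [Set.indicator_apply, h1, h2, Z31.s, this]
      · simp [Set.indicator_apply, h1, Z31.s]
    rw [tsum_congr this, Z31.tsum_s]
  refine ⟨hmain, ?_⟩
  rw [hmain]
  have hinj : Function.Injective (fun k : ℕ+ => (k : ℕ)) := fun a b h => PNat.coe_injective h
  have hsupp : Function.support (fun n : ℕ => ((n : ℝ) ^ 4)⁻¹)
      ⊆ Set.range (fun k : ℕ+ => (k : ℕ)) := by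
    intro n hn
    have : n ≠ 0 := by
      rintro rfl; simp [Function.support] at hn
    exact ⟨⟨n, Nat.pos_of_ne_zero this⟩, rfl⟩
  have h4 : ∑' n : ℕ, ((n : ℝ) ^ 4)⁻¹ = Real.pi ^ 4 / 90 := by
    simpa [one_div] using hasSum_zeta_four.tsum_eq
  have : ∑' k : ℕ+, ((k : ℝ) ^ 4)⁻¹ = ∑' n : ℕ, ((n : ℝ) ^ 4)⁻¹ := by
    rw [← hinj.tsum_eq hsupp]
  rw [this, h4]
  ring
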